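/- Let g(x̃) = f(x̃) − x̃·Σ_i f_i(x̃) where f is given by mass-action kinetics on a reaction network with nonnegative-integer vertices. Then g is again given by mass-action kinetics; that is, for each i, every monomial with negative coefficient in g_i is divisible by x̃_i. -/

import Mathlib

open MvPolynomial

/-- If `F` is the mass-action vector field (as polynomials) of a reaction
network with nonnegative-integer vertices and positive rate constants, then the
relative-population field `G i = F i - X i * (∑ j, F j)` is again mass-action:
every monomial of `G i` with negative coefficient is divisible by `X i`. -/
theorem relative_population_is_mass_action
    (n : ℕ) (E : Finset ((Fin n → ℕ) × (Fin n → ℕ)))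
    (k : ((Fin n → ℕ) × (Fin n → ℕ)) → ℝ)
    (hk : ∀ e ∈ E, 0 < k e)
    (F : Fin n → MvPolynomial (Fin n) ℝ)
    (hF : ∀ i, F i =
      ∑ e ∈ E, C (k e * ((e.2 i : ℝ) - (e.1 i : ℝ))) * ∏ j, (X j) ^ (e.1 j))
    (G : Fin n → MvPolynomial (Fin n) ℝ)
    (hG : ∀ i, G i = F i - X i * ∑ j, F j) :
    ∀ i : Fin n, ∀ m : Fin n →₀ ℕ, (G i).coeff m < 0 → 1 ≤ m i := by
  intro i m hm
  by_contra h
  push_neg at h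
  have hmi : m i = 0 := Nat.lt_one_iff.mp h
  rw [hG, coeff_sub] at hm
  have h2 : coeff m (X i * ∑ j, F j) = 0 := by
    rw [mul_comm, coeff_mul_X']
    simp [Finsupp.mem_support_iff, hmi]
  rw [h2, sub_zero, hF, coeff_sum] at hm
  have hterm : ∀ e ∈ E,
      0 ≤ coeff m (C (k e * ((e.2 i : ℝ) - (e.1 i : ℝ))) * ∏ j, (X j) ^ (e.1 j)) := by
    intro e he
    rw [coeff_C_mul]
    have hprod : (∏ j, (X j : MvPolynomial (Fin n) ℝ) ^ (e.1 j))
        = monomial (Finsupp.equivFunOnFinite.symm e.1) 1 := by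
      rw [← prod_X_pow_eq_monomial]
      refine (Finset.prod_subset (Finset.subset_univ _) ?_).symm
      intro x _ hx
      have : e.1 x = 0 := by
        simpa [Finsupp.equivFunOnFinite] using hx
      simp [Finsupp.equivFunOnFinite, this]
    rw [hprod, coeff_monomial]
    split_ifs with hme
    · have h1i : e.1 i = 0 := by
        have := congrArg (fun f => f i) hme
        simp only [hmi] at this; exact this
      rw [h1i]
      have hke := hk e he
      simp only [Nat.cast_zero, sub_zero, mul_one]
      positivity
    · simp
  exact absurd hm (not_lt.mpr (Finset.sum_nonneg hterm))
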